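/- F satisfies the functional equation F(1/α, 1/β) = α · β · F(α, β) for all real α, β > 0 (as values in [0, ∞]). -/

import Mathlib

open MeasureTheory Real

/-- `F(α, β) = ∫₀^{2π} (|α e^{iθ} − 1| · |β e^{iθ} + 1|)⁻¹ dθ`, as a value in `[0, ∞]`. -/
noncomputable def Ffun (α β : ℝ) : ENNReal :=
  ∫⁻ θ in Set.Icc (0:ℝ) (2 * Real.pi),
    ENNReal.ofReal
      ((‖α * Complex.exp (Complex.I * θ) - 1‖ *
        ‖β * Complex.exp (Complex.I * θ) + 1‖)⁻¹)

lemma conj_expI (θ : ℝ) :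
    (starRingEnd ℂ) (Complex.exp (Complex.I * θ)) = Complex.exp (-(Complex.I * θ)) := by
  rw [← Complex.exp_conj]
  congr 1
  simp [Complex.conj_ofReal]

lemma expI_mul (θ : ℝ) :
    Complex.exp (Complex.I * θ) * Complex.exp (-(Complex.I * θ)) = 1 := by
  rw [← Complex.exp_add]; simp

lemma key1 (α : ℝ) (hα : 0 < α) (θ : ℝ) :
    ‖((1/α : ℝ) : ℂ) * Complex.exp (Complex.I * θ) - 1‖
      = α⁻¹ * ‖((α:ℝ) : ℂ) * Complex.exp (Complex.I * θ) - 1‖ := by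
  have hα' : (α : ℂ) ≠ 0 := by exact_mod_cast hα.ne'
  have h1 : ((1/α : ℝ) : ℂ) * Complex.exp (Complex.I * θ) - 1
      = -(((1/α : ℝ) : ℂ) * Complex.exp (Complex.I * θ)
          * (starRingEnd ℂ) ((α:ℝ) * Complex.exp (Complex.I * θ) - 1)) := by
    rw [map_sub, map_mul, conj_expI, Complex.conj_ofReal, map_one]
    push_cast
    field_simp
    linear_combination ((α : ℂ)) * expI_mul θ
  rw [h1, norm_neg, norm_mul, norm_mul, Complex.norm_real, Real.norm_eq_abs, Complex.norm_conj]
  have he1 : ‖Complex.exp (Complex.I * θ)‖ = 1 := by simp [Complex.norm_exp]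
  rw [he1, abs_of_pos (by positivity : (0:ℝ) < 1/α)]
  ring

lemma key2 (β : ℝ) (hβ : 0 < β) (θ : ℝ) :
    ‖((1/β : ℝ) : ℂ) * Complex.exp (Complex.I * θ) + 1‖
      = β⁻¹ * ‖((β:ℝ) : ℂ) * Complex.exp (Complex.I * θ) + 1‖ := by
  have hβ' : (β : ℂ) ≠ 0 := by exact_mod_cast hβ.ne'
  have h1 : ((1/β : ℝ) : ℂ) * Complex.exp (Complex.I * θ) + 1
      = ((1/β : ℝ) : ℂ) * Complex.exp (Complex.I * θ)
          * (starRingEnd ℂ) ((β:ℝ) * Complex.exp (Complex.I * θ) + 1) := by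
    rw [map_add, map_mul, conj_expI, Complex.conj_ofReal, map_one]
    push_cast
    field_simp
    linear_combination (-(β : ℂ)) * expI_mul θ
  rw [h1, norm_mul, norm_mul, Complex.norm_real, Real.norm_eq_abs, Complex.norm_conj]
  have he1 : ‖Complex.exp (Complex.I * θ)‖ = 1 := by simp [Complex.norm_exp]
  rw [he1, abs_of_pos (by positivity : (0:ℝ) < 1/β)]
  ring

theorem stmt7 (α β : ℝ) (hα : 0 < α) (hβ : 0 < β) :
    Ffun (1 / α) (1 / β) = ENNReal.ofReal (α * β) * Ffun α β := by
  unfold Ffun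
  rw [← lintegral_const_mul' _ _ ENNReal.ofReal_ne_top]
  refine lintegral_congr fun θ => ?_
  rw [key1 α hα θ, key2 β hβ θ, ← ENNReal.ofReal_mul (by positivity)]
  congr 1
  have hA : 0 ≤ ‖((α:ℝ) : ℂ) * Complex.exp (Complex.I * θ) - 1‖ := by positivity
  have hB : 0 ≤ ‖((β:ℝ) : ℂ) * Complex.exp (Complex.I * θ) + 1‖ := by positivity
  field_simp
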